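/- Let (A, B) be an X-mutation pair in C. Then the quotient categories A/X and B/X (the quotients of the full subcategories A and B by the ideal of morphisms factoring through objects of X) are equivalent; an equivalence G: A/X → B/X is given on objects by sending an object A of A to the third term B' of a distinguished triangle A → X₀ → B' → A⟦1⟧ whose first morphism is a left X-approximation and whose second morphism is a right X-approximation. -/

import Mathlib

/-!
Common definitions: the ideal of morphisms factoring through a subcategory `X`
(given as a set of objects of `C`), `X`-monic and `X`-epic morphisms, left and
right `X`-approximations, additive subcategories closed under isomorphisms,
direct sums and direct summands, and the additive quotient category `C/X`
(realized via `CategoryTheory.Quotient` of the relation `xRel X`).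
-/

open CategoryTheory Category Limits Pretriangulated

universe v u

namespace PaperStmt

variable {C : Type u} [Category.{v} C]

/-- `f` factors through an object of `X`. -/
def FactorsThru (X : Set C) {A B : C} (f : A ⟶ B) : Prop :=
  ∃ (M : C) (g : A ⟶ M) (h : M ⟶ B), M ∈ X ∧ g ≫ h = f

/-- `f : A ⟶ B` is `X`-monic: the map `Hom(B, X') → Hom(A, X')`, `g ↦ g ∘ f`,
is surjective for every object `X'` of `X`. -/
def IsXMonic (X : Set C) {A B : C} (f : A ⟶ B) : Prop :=
  ∀ ⦃X' : C⦄, X' ∈ X → ∀ g : A ⟶ X', ∃ h : B ⟶ X', f ≫ h = g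

/-- `f : A ⟶ B` is `X`-epic: the map `Hom(X', A) → Hom(X', B)`, `g ↦ f ∘ g`,
is surjective for every object `X'` of `X`. -/
def IsXEpic (X : Set C) {A B : C} (f : A ⟶ B) : Prop :=
  ∀ ⦃X' : C⦄, X' ∈ X → ∀ g : X' ⟶ B, ∃ h : X' ⟶ A, h ≫ f = g

/-- `α : A ⟶ X₀` is a left `X`-approximation of `A`: `X₀` lies in `X` and every
morphism from `A` to an object of `X` factors through `α`. -/
def IsLeftApprox (X : Set C) {A X₀ : C} (α : A ⟶ X₀) : Prop :=
  X₀ ∈ X ∧ IsXMonic X α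

/-- `β : X₀ ⟶ B` is a right `X`-approximation of `B`: `X₀` lies in `X` and every
morphism from an object of `X` to `B` factors through `β`. -/
def IsRightApprox (X : Set C) {X₀ B : C} (β : X₀ ⟶ B) : Prop :=
  X₀ ∈ X ∧ IsXEpic X β

/-- `X` is (the object class of) a full additive subcategory of `C`, closed
under isomorphisms, finite direct sums and direct summands. -/
structure IsAdditiveClosedSubcat [Preadditive C] [HasBinaryBiproducts C] (X : Set C) :
    Prop where
  zero_mem : ∀ Z : C, IsZero Z → Z ∈ X
  iso_closed : ∀ {A B : C}, (A ≅ B) → A ∈ X → B ∈ X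
  sum_closed : ∀ {A B : C}, A ∈ X → B ∈ X → (A ⊞ B) ∈ X
  summand_closed : ∀ {A B : C}, (A ⊞ B) ∈ X → A ∈ X

/-- Two morphisms are identified in the quotient category `C/X` precisely when
their difference factors through an object of `X`. -/
def xRel [Preadditive C] (X : Set C) : HomRel C :=
  fun _ _ f g => FactorsThru X (f - g)

section Triangulated

variable [Preadditive C] [HasZeroObject C] [HasShift C ℤ]
  [∀ n : ℤ, (shiftFunctor C n).Additive] [Pretriangulated C]

/-- `(𝒜, ℬ)` is an `X`-mutation pair in the triangulated category `C`. -/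
def IsMutationPair (X 𝒜 ℬ : Set C) : Prop :=
  X ⊆ 𝒜 ∧ X ⊆ ℬ ∧
  (∀ A ∈ 𝒜, ∃ (X₀ B' : C) (α : A ⟶ X₀) (β : X₀ ⟶ B') (δ : B' ⟶ A⟦(1 : ℤ)⟧),
      B' ∈ ℬ ∧ (Triangle.mk α β δ ∈ distTriang C) ∧
      IsLeftApprox X α ∧ IsRightApprox X β) ∧
  (∀ B ∈ ℬ, ∃ (A' X₀ : C) (α : A' ⟶ X₀) (β : X₀ ⟶ B) (δ : B ⟶ A'⟦(1 : ℤ)⟧),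
      A' ∈ 𝒜 ∧ (Triangle.mk α β δ ∈ distTriang C) ∧
      IsLeftApprox X α ∧ IsRightApprox X β)

end Triangulated

/-- The ideal of morphisms factoring through `X`, on the full subcategory of `C`
with objects in `𝒜`; the quotient category `𝒜/X` is
`CategoryTheory.Quotient (subRel X 𝒜)`. -/
def subRel [Preadditive C] (X 𝒜 : Set C) : HomRel (ObjectProperty.FullSubcategory (· ∈ 𝒜)) :=
  fun a b f g => FactorsThru X ((f.hom : a.obj ⟶ b.obj) - (g.hom : a.obj ⟶ b.obj))

section Mutation

variable [Preadditive C] [HasZeroObject C] [HasShift C ℤ]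
  [∀ n : ℤ, (shiftFunctor C n).Additive] [Pretriangulated C] [HasBinaryBiproducts C]

open ZeroObject in
lemma factorsThru_zero {X : Set C} (hX : IsAdditiveClosedSubcat X) (A B : C) :
    FactorsThru X (0 : A ⟶ B) :=
  ⟨0, 0, 0, hX.zero_mem 0 (isZero_zero C), by simp⟩

/-- View a morphism of a full subcategory as a morphism of the ambient category. -/
abbrev unFS {S : Set C} {a b : ObjectProperty.FullSubcategory (· ∈ S)} (f : a ⟶ b) : a.obj ⟶ b.obj := f.hom

open ZeroObject in
lemma factorsThru_sub_self {X : Set C} (hX : IsAdditiveClosedSubcat X) {A B : C} (f : A ⟶ B) :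
    FactorsThru X (f - f) := by
  rw [sub_self]; exact factorsThru_zero hX A B

/-- Key lemma (forward): if `(f, ?, h)` underlies a morphism of distinguished
triangles, `α` is `X`-monic, `X₀' ∈ X` and `f` factors through `X`, then `h`
factors through `X`. -/
lemma key_fwd {X : Set C}
    {A X₀ B₁ A' X₀' B₂ : C}
    {α : A ⟶ X₀} {β : X₀ ⟶ B₁} {δ : B₁ ⟶ A⟦(1 : ℤ)⟧}
    (hT : Triangle.mk α β δ ∈ distTriang C)
    {α' : A' ⟶ X₀'} {β' : X₀' ⟶ B₂} {δ' : B₂ ⟶ A'⟦(1 : ℤ)⟧}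
    (hT' : Triangle.mk α' β' δ' ∈ distTriang C)
    (hmon : IsXMonic X α) (hX₀' : X₀' ∈ X)
    {f : A ⟶ A'} {h : B₁ ⟶ B₂}
    (hf : FactorsThru X f)
    (c3 : h ≫ δ' = δ ≫ f⟦(1 : ℤ)⟧') :
    FactorsThru X h := by
  obtain ⟨M, u, v, hM, huv⟩ := hf
  obtain ⟨u', hu'⟩ := hmon hM u
  have hf2 : α ≫ u' ≫ v = f := by rw [← Category.assoc, hu', huv]
  have h31 : δ ≫ α⟦(1 : ℤ)⟧' = 0 := comp_distTriang_mor_zero₃₁ _ hT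
  have hδ : h ≫ δ' = 0 := by
    rw [c3, ← hf2, Functor.map_comp, Functor.map_comp, ← Category.assoc, ← Category.assoc,
      h31, zero_comp, zero_comp]
  obtain ⟨p, hp⟩ := Triangle.coyoneda_exact₃ _ hT' h hδ
  exact ⟨X₀', p, β', hX₀', hp.symm⟩

/-- Key lemma (backward): if `(e, ?, f)` underlies a morphism of distinguished
triangles, `β'` is `X`-epic, `X₀ ∈ X` and `f` factors through `X`, then `e`
factors through `X`. -/
lemma key_bwd {X : Set C}
    {A X₀ B A' X₀' B' : C}
    {α : A ⟶ X₀} {β : X₀ ⟶ B} {δ : B ⟶ A⟦(1 : ℤ)⟧}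
    (hT : Triangle.mk α β δ ∈ distTriang C)
    {α' : A' ⟶ X₀'} {β' : X₀' ⟶ B'} {δ' : B' ⟶ A'⟦(1 : ℤ)⟧}
    (hT' : Triangle.mk α' β' δ' ∈ distTriang C)
    (hepi : IsXEpic X β') (hX₀ : X₀ ∈ X)
    {f : B ⟶ B'} {e : A ⟶ A'}
    (hf : FactorsThru X f)
    (c3 : f ≫ δ' = δ ≫ e⟦(1 : ℤ)⟧') :
    FactorsThru X e := by
  obtain ⟨M, u, v, hM, huv⟩ := hf
  obtain ⟨v', hv'⟩ := hepi hM v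
  have h23 : β' ≫ δ' = 0 := comp_distTriang_mor_zero₂₃ _ hT'
  have hδ : δ ≫ e⟦(1 : ℤ)⟧' = 0 := by
    rw [← c3, ← huv, ← hv', Category.assoc, Category.assoc, h23, comp_zero, comp_zero]
  obtain ⟨q, hq⟩ := Triangle.yoneda_exact₃ _ (rot_of_distTriang _ hT) (e⟦(1 : ℤ)⟧') hδ
  have he : e = α ≫ (shiftFunctor C (1 : ℤ)).preimage (-q) := by
    apply (shiftFunctor C (1 : ℤ)).map_injective
    rw [Functor.map_comp]
    erw [Functor.map_preimage]
    refine hq.trans ?_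
    dsimp [Triangle.rotate]
    simp
    exact (Preadditive.neg_comp _ _).trans (Preadditive.comp_neg _ _).symm
  exact ⟨X₀, α, _, hX₀, he.symm⟩

variable (X 𝒜 ℬ : Set C)

/-- Chosen data of a forward mutation triangle `A → X₀ → B' → A⟦1⟧`. -/
structure FwdData (A : C) where
  X₀ : C
  B' : C
  α : A ⟶ X₀
  β : X₀ ⟶ B'
  δ : B' ⟶ A⟦(1 : ℤ)⟧
  hB' : B' ∈ ℬ
  hTri : Triangle.mk α β δ ∈ distTriang C
  hα : IsLeftApprox X α
  hβ : IsRightApprox X β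

/-- Chosen data of a backward mutation triangle `A' → X₀ → B → A'⟦1⟧`. -/
structure BwdData (B : C) where
  A' : C
  X₀ : C
  α : A' ⟶ X₀
  β : X₀ ⟶ B
  δ : B ⟶ A'⟦(1 : ℤ)⟧
  hA' : A' ∈ 𝒜
  hTri : Triangle.mk α β δ ∈ distTriang C
  hα : IsLeftApprox X α
  hβ : IsRightApprox X β

variable {X 𝒜 ℬ}

noncomputable def fwdD (hmut : IsMutationPair X 𝒜 ℬ) (A : C) (hA : A ∈ 𝒜) :
    FwdData X ℬ A :=
  Classical.choice (by
    obtain ⟨X₀, B', α, β, δ, h1, h2, h3, h4⟩ := hmut.2.2.1 A hA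
    exact ⟨⟨X₀, B', α, β, δ, h1, h2, h3, h4⟩⟩)

noncomputable def bwdD (hmut : IsMutationPair X 𝒜 ℬ) (B : C) (hB : B ∈ ℬ) :
    BwdData X 𝒜 B :=
  Classical.choice (by
    obtain ⟨A', X₀, α, β, δ, h1, h2, h3, h4⟩ := hmut.2.2.2 B hB
    exact ⟨⟨A', X₀, α, β, δ, h1, h2, h3, h4⟩⟩)

lemma exists_fwdHom {A₁ A₂ : C} (D₁ : FwdData X ℬ A₁) (D₂ : FwdData X ℬ A₂)
    (f : A₁ ⟶ A₂) :
    ∃ h : D₁.B' ⟶ D₂.B', h ≫ D₂.δ = D₁.δ ≫ f⟦(1 : ℤ)⟧' := by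
  obtain ⟨g, hg⟩ := D₁.hα.2 D₂.hα.1 (f ≫ D₂.α)
  obtain ⟨h, -, hc⟩ := complete_distinguished_triangle_morphism _ _ D₁.hTri D₂.hTri
    f g hg
  exact ⟨h, hc.symm⟩

lemma exists_bwdHom {B₁ B₂ : C} (E₁ : BwdData X 𝒜 B₁) (E₂ : BwdData X 𝒜 B₂)
    (f : B₁ ⟶ B₂) :
    ∃ e : E₁.A' ⟶ E₂.A', f ≫ E₂.δ = E₁.δ ≫ e⟦(1 : ℤ)⟧' := by
  obtain ⟨g, hg⟩ := E₂.hβ.2 E₁.hβ.1 (E₁.β ≫ f)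
  obtain ⟨e, -, hc⟩ := complete_distinguished_triangle_morphism₁ _ _ E₁.hTri E₂.hTri
    g f hg.symm
  exact ⟨e, hc.symm⟩

noncomputable def fwdHom {A₁ A₂ : C} (D₁ : FwdData X ℬ A₁) (D₂ : FwdData X ℬ A₂)
    (f : A₁ ⟶ A₂) : D₁.B' ⟶ D₂.B' :=
  (exists_fwdHom D₁ D₂ f).choose

lemma fwdHom_spec {A₁ A₂ : C} (D₁ : FwdData X ℬ A₁) (D₂ : FwdData X ℬ A₂)
    (f : A₁ ⟶ A₂) : fwdHom D₁ D₂ f ≫ D₂.δ = D₁.δ ≫ f⟦(1 : ℤ)⟧' :=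
  (exists_fwdHom D₁ D₂ f).choose_spec

noncomputable def bwdHom {B₁ B₂ : C} (E₁ : BwdData X 𝒜 B₁) (E₂ : BwdData X 𝒜 B₂)
    (f : B₁ ⟶ B₂) : E₁.A' ⟶ E₂.A' :=
  (exists_bwdHom E₁ E₂ f).choose

lemma bwdHom_spec {B₁ B₂ : C} (E₁ : BwdData X 𝒜 B₁) (E₂ : BwdData X 𝒜 B₂)
    (f : B₁ ⟶ B₂) : f ≫ E₂.δ = E₁.δ ≫ (bwdHom E₁ E₂ f)⟦(1 : ℤ)⟧' :=
  (exists_bwdHom E₁ E₂ f).choose_spec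

lemma fwd_congr {A₁ A₂ : C} (D₁ : FwdData X ℬ A₁) (D₂ : FwdData X ℬ A₂)
    {f f' : A₁ ⟶ A₂} {h h' : D₁.B' ⟶ D₂.B'}
    (hh : h ≫ D₂.δ = D₁.δ ≫ f⟦(1 : ℤ)⟧') (hh' : h' ≫ D₂.δ = D₁.δ ≫ f'⟦(1 : ℤ)⟧')
    (hff' : FactorsThru X (f - f')) : FactorsThru X (h - h') :=
  key_fwd D₁.hTri D₂.hTri D₁.hα.2 D₂.hα.1 hff'
    (by simp only [Preadditive.sub_comp, Preadditive.comp_sub, Functor.map_sub, hh, hh'])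

lemma bwd_congr {B₁ B₂ : C} (E₁ : BwdData X 𝒜 B₁) (E₂ : BwdData X 𝒜 B₂)
    {f f' : B₁ ⟶ B₂} {e e' : E₁.A' ⟶ E₂.A'}
    (hh : f ≫ E₂.δ = E₁.δ ≫ e⟦(1 : ℤ)⟧') (hh' : f' ≫ E₂.δ = E₁.δ ≫ e'⟦(1 : ℤ)⟧')
    (hff' : FactorsThru X (f - f')) : FactorsThru X (e - e') :=
  key_bwd E₁.hTri E₂.hTri E₂.hβ.2 E₁.hβ.1 hff'
    (by simp only [Preadditive.sub_comp, Preadditive.comp_sub, Functor.map_sub, hh, hh'])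

end Mutation
section Mutation2

set_option linter.unusedSectionVars false

variable [Preadditive C] [HasZeroObject C] [HasShift C ℤ]
  [∀ n : ℤ, (shiftFunctor C n).Additive] [Pretriangulated C] [HasBinaryBiproducts C]

/-- Two forward mutation triangles on the same object have third terms which are
mutually inverse modulo `X`. -/
lemma fwd_mutual {X : Set C} (hX : IsAdditiveClosedSubcat X) {A X₁ B₁ X₂ B₂ : C}
    {α₁ : A ⟶ X₁} {β₁ : X₁ ⟶ B₁} {δ₁ : B₁ ⟶ A⟦(1 : ℤ)⟧}
    (hT₁ : Triangle.mk α₁ β₁ δ₁ ∈ distTriang C)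
    {α₂ : A ⟶ X₂} {β₂ : X₂ ⟶ B₂} {δ₂ : B₂ ⟶ A⟦(1 : ℤ)⟧}
    (hT₂ : Triangle.mk α₂ β₂ δ₂ ∈ distTriang C)
    (h₁ : IsLeftApprox X α₁) (h₂ : IsLeftApprox X α₂) :
    ∃ (b : B₁ ⟶ B₂) (b' : B₂ ⟶ B₁), b ≫ δ₂ = δ₁ ∧ b' ≫ δ₁ = δ₂ ∧
      FactorsThru X (b ≫ b' - 𝟙 B₁) ∧ FactorsThru X (b' ≫ b - 𝟙 B₂) := by
  have half : ∀ {Y₁ C₁ Y₂ C₂ : C} {a₁ : A ⟶ Y₁} {b₁ : Y₁ ⟶ C₁} {d₁ : C₁ ⟶ A⟦(1 : ℤ)⟧}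
      (_ : Triangle.mk a₁ b₁ d₁ ∈ distTriang C)
      {a₂ : A ⟶ Y₂} {b₂ : Y₂ ⟶ C₂} {d₂ : C₂ ⟶ A⟦(1 : ℤ)⟧}
      (_ : Triangle.mk a₂ b₂ d₂ ∈ distTriang C)
      (_ : IsXMonic X a₁) (_ : Y₂ ∈ X), ∃ b : C₁ ⟶ C₂, b ≫ d₂ = d₁ := by
    intro Y₁ C₁ Y₂ C₂ a₁ b₁ d₁ hU₁ a₂ b₂ d₂ hU₂ hm hY₂
    obtain ⟨g, hg⟩ := hm hY₂ a₂
    obtain ⟨b, -, hc⟩ := complete_distinguished_triangle_morphism _ _ hU₁ hU₂ (𝟙 A) g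
      (hg.trans (id_comp _).symm)
    refine ⟨b, hc.symm.trans ((congrArg (fun t => d₁ ≫ t) ((shiftFunctor C (1 : ℤ)).map_id A)).trans (comp_id _))⟩
  obtain ⟨b, hb⟩ := half hT₁ hT₂ h₁.2 h₂.1
  obtain ⟨b', hb'⟩ := half hT₂ hT₁ h₂.2 h₁.1
  refine ⟨b, b', hb, hb', ?_, ?_⟩
  · refine key_fwd hT₁ hT₁ h₁.2 h₁.1 (f := (0 : A ⟶ A)) (factorsThru_zero hX A A) ?_
    rw [Functor.map_zero, comp_zero, Preadditive.sub_comp, Category.assoc, hb', hb, id_comp,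
      sub_self]
  · refine key_fwd hT₂ hT₂ h₂.2 h₂.1 (f := (0 : A ⟶ A)) (factorsThru_zero hX A A) ?_
    rw [Functor.map_zero, comp_zero, Preadditive.sub_comp, Category.assoc, hb, hb', id_comp,
      sub_self]

/-- Two backward mutation triangles on the same object have first terms which are
mutually inverse modulo `X`. -/
lemma bwd_mutual {X : Set C} (hX : IsAdditiveClosedSubcat X) {B A₁ X₁ A₂ X₂ : C}
    {α₁ : A₁ ⟶ X₁} {β₁ : X₁ ⟶ B} {δ₁ : B ⟶ A₁⟦(1 : ℤ)⟧}
    (hT₁ : Triangle.mk α₁ β₁ δ₁ ∈ distTriang C)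
    {α₂ : A₂ ⟶ X₂} {β₂ : X₂ ⟶ B} {δ₂ : B ⟶ A₂⟦(1 : ℤ)⟧}
    (hT₂ : Triangle.mk α₂ β₂ δ₂ ∈ distTriang C)
    (h₁ : IsRightApprox X β₁) (h₂ : IsRightApprox X β₂) :
    ∃ (a : A₁ ⟶ A₂) (a' : A₂ ⟶ A₁), δ₁ ≫ a⟦(1 : ℤ)⟧' = δ₂ ∧ δ₂ ≫ a'⟦(1 : ℤ)⟧' = δ₁ ∧
      FactorsThru X (a ≫ a' - 𝟙 A₁) ∧ FactorsThru X (a' ≫ a - 𝟙 A₂) := by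
  have half : ∀ {D₁ Y₁ D₂ Y₂ : C} {a₁ : D₁ ⟶ Y₁} {b₁ : Y₁ ⟶ B} {d₁ : B ⟶ D₁⟦(1 : ℤ)⟧}
      (_ : Triangle.mk a₁ b₁ d₁ ∈ distTriang C)
      {a₂ : D₂ ⟶ Y₂} {b₂ : Y₂ ⟶ B} {d₂ : B ⟶ D₂⟦(1 : ℤ)⟧}
      (_ : Triangle.mk a₂ b₂ d₂ ∈ distTriang C)
      (_ : IsXEpic X b₂) (_ : Y₁ ∈ X), ∃ a : D₁ ⟶ D₂, d₁ ≫ a⟦(1 : ℤ)⟧' = d₂ := by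
    intro D₁ Y₁ D₂ Y₂ a₁ b₁ d₁ hU₁ a₂ b₂ d₂ hU₂ he hY₁
    obtain ⟨g, hg⟩ := he hY₁ b₁
    obtain ⟨a, -, hc⟩ := complete_distinguished_triangle_morphism₁ _ _ hU₁ hU₂ g (𝟙 B)
      ((comp_id _).trans hg.symm)
    refine ⟨a, hc.trans (id_comp _)⟩
  obtain ⟨a, ha⟩ := half hT₁ hT₂ h₂.2 h₁.1
  obtain ⟨a', ha'⟩ := half hT₂ hT₁ h₁.2 h₂.1
  refine ⟨a, a', ha, ha', ?_, ?_⟩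
  · refine key_bwd hT₁ hT₁ h₁.2 h₁.1 (f := (0 : B ⟶ B)) (factorsThru_zero hX B B) ?_
    simp only [zero_comp, Functor.map_sub, Functor.map_comp, CategoryTheory.Functor.map_id,
      Preadditive.comp_sub, comp_id, ← Category.assoc, ha, ha', sub_self]
  · refine key_bwd hT₂ hT₂ h₂.2 h₂.1 (f := (0 : B ⟶ B)) (factorsThru_zero hX B B) ?_
    simp only [zero_comp, Functor.map_sub, Functor.map_comp, CategoryTheory.Functor.map_id,
      Preadditive.comp_sub, comp_id, ← Category.assoc, ha', ha, sub_self]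

variable {X 𝒜 ℬ : Set C} (hX : IsAdditiveClosedSubcat X) (hmut : IsMutationPair X 𝒜 ℬ)

/-- The functor `𝒜 ⥤ ℬ/X`. -/
noncomputable def fwdFun : ObjectProperty.FullSubcategory (· ∈ 𝒜) ⥤ CategoryTheory.Quotient (subRel X ℬ) where
  obj A := (Quotient.functor (subRel X ℬ)).obj
    ⟨(fwdD hmut A.obj A.property).B', (fwdD hmut A.obj A.property).hB'⟩
  map {A₁ A₂} f := (Quotient.functor (subRel X ℬ)).map
    (X := ⟨(fwdD hmut A₁.obj A₁.property).B', (fwdD hmut A₁.obj A₁.property).hB'⟩)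
    (Y := ⟨(fwdD hmut A₂.obj A₂.property).B', (fwdD hmut A₂.obj A₂.property).hB'⟩)
    (ObjectProperty.homMk (fwdHom _ _ f.hom))
  map_id A := by
    rw [show 𝟙 ((Quotient.functor (subRel X ℬ)).obj
        ⟨(fwdD hmut A.obj A.property).B', (fwdD hmut A.obj A.property).hB'⟩) =
      (Quotient.functor (subRel X ℬ)).map
        (X := ⟨(fwdD hmut A.obj A.property).B', (fwdD hmut A.obj A.property).hB'⟩)
        (Y := ⟨(fwdD hmut A.obj A.property).B', (fwdD hmut A.obj A.property).hB'⟩)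
        (ObjectProperty.homMk (𝟙 (fwdD hmut A.obj A.property).B')) from ((Quotient.functor _).map_id _).symm]
    refine CategoryTheory.Quotient.sound _ ?_
    exact fwd_congr (f' := 𝟙 A.obj) _ _ (fwdHom_spec _ _ _) (by simp)
      (factorsThru_sub_self hX _)
  map_comp {A₁ A₂ A₃} f g := by
    rw [← Functor.map_comp]
    refine CategoryTheory.Quotient.sound _ ?_
    refine fwd_congr (f' := unFS f ≫ unFS g) _ _
      (fwdHom_spec _ _ _) ?_
      (factorsThru_sub_self hX (unFS f ≫ unFS g))
    show (fwdHom (fwdD hmut A₁.obj A₁.property) (fwdD hmut A₂.obj A₂.property) f.hom ≫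
        fwdHom (fwdD hmut A₂.obj A₂.property) (fwdD hmut A₃.obj A₃.property) g.hom) ≫
        (fwdD hmut A₃.obj A₃.property).δ = _
    rw [Category.assoc, fwdHom_spec, ← Category.assoc, fwdHom_spec, Category.assoc,
      ← Functor.map_comp]

/-- The functor `ℬ ⥤ 𝒜/X`. -/
noncomputable def bwdFun : ObjectProperty.FullSubcategory (· ∈ ℬ) ⥤ CategoryTheory.Quotient (subRel X 𝒜) where
  obj B := (Quotient.functor (subRel X 𝒜)).obj
    ⟨(bwdD hmut B.obj B.property).A', (bwdD hmut B.obj B.property).hA'⟩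
  map {B₁ B₂} f := (Quotient.functor (subRel X 𝒜)).map
    (X := ⟨(bwdD hmut B₁.obj B₁.property).A', (bwdD hmut B₁.obj B₁.property).hA'⟩)
    (Y := ⟨(bwdD hmut B₂.obj B₂.property).A', (bwdD hmut B₂.obj B₂.property).hA'⟩)
    (ObjectProperty.homMk (bwdHom _ _ f.hom))
  map_id B := by
    rw [show 𝟙 ((Quotient.functor (subRel X 𝒜)).obj
        ⟨(bwdD hmut B.obj B.property).A', (bwdD hmut B.obj B.property).hA'⟩) =
      (Quotient.functor (subRel X 𝒜)).map
        (X := ⟨(bwdD hmut B.obj B.property).A', (bwdD hmut B.obj B.property).hA'⟩)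
        (Y := ⟨(bwdD hmut B.obj B.property).A', (bwdD hmut B.obj B.property).hA'⟩)
        (ObjectProperty.homMk (𝟙 (bwdD hmut B.obj B.property).A')) from ((Quotient.functor _).map_id _).symm]
    refine CategoryTheory.Quotient.sound _ ?_
    exact bwd_congr (f' := 𝟙 B.obj) _ _ (bwdHom_spec _ _ _) (by simp)
      (factorsThru_sub_self hX _)
  map_comp {B₁ B₂ B₃} f g := by
    rw [← Functor.map_comp]
    refine CategoryTheory.Quotient.sound _ ?_
    refine bwd_congr (f' := unFS f ≫ unFS g) _ _
      (bwdHom_spec _ _ _) ?_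
      (factorsThru_sub_self hX (unFS f ≫ unFS g))
    rw [Category.assoc, bwdHom_spec (bwdD hmut B₂.obj B₂.property) (bwdD hmut B₃.obj B₃.property) g.hom,
      ← Category.assoc, bwdHom_spec (bwdD hmut B₁.obj B₁.property) (bwdD hmut B₂.obj B₂.property) f.hom,
      Category.assoc, ← Functor.map_comp]
    rfl

end Mutation2
section Mutation3

set_option linter.unusedSectionVars false

variable [Preadditive C] [HasZeroObject C] [HasShift C ℤ]
  [∀ n : ℤ, (shiftFunctor C n).Additive] [Pretriangulated C] [HasBinaryBiproducts C]

variable {X 𝒜 ℬ : Set C} (hX : IsAdditiveClosedSubcat X) (hmut : IsMutationPair X 𝒜 ℬ)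

/-- The induced functor `𝒜/X ⥤ ℬ/X`. -/
noncomputable def GFun : CategoryTheory.Quotient (subRel X 𝒜) ⥤
    CategoryTheory.Quotient (subRel X ℬ) :=
  CategoryTheory.Quotient.lift _ (fwdFun hX hmut) (fun a b f₁ f₂ hrel =>
    CategoryTheory.Quotient.sound _
      (fwd_congr _ _
        (fwdHom_spec (fwdD hmut a.obj a.property) (fwdD hmut b.obj b.property) f₁.hom)
        (fwdHom_spec (fwdD hmut a.obj a.property) (fwdD hmut b.obj b.property) f₂.hom) hrel))

/-- The induced functor `ℬ/X ⥤ 𝒜/X`. -/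
noncomputable def HFun : CategoryTheory.Quotient (subRel X ℬ) ⥤
    CategoryTheory.Quotient (subRel X 𝒜) :=
  CategoryTheory.Quotient.lift _ (bwdFun hX hmut) (fun a b f₁ f₂ hrel =>
    CategoryTheory.Quotient.sound _
      (bwd_congr _ _
        (bwdHom_spec (bwdD hmut a.obj a.property) (bwdD hmut b.obj b.property) f₁.hom)
        (bwdHom_spec (bwdD hmut a.obj a.property) (bwdD hmut b.obj b.property) f₂.hom) hrel))

/-- Mutually inverse mod `X` morphisms give an isomorphism in the quotient. -/
noncomputable def quotMutualIso {S : Set C} (X : Set C) {a b : ObjectProperty.FullSubcategory (· ∈ S)}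
    (f : a.obj ⟶ b.obj) (g : b.obj ⟶ a.obj)
    (h1 : FactorsThru X (f ≫ g - 𝟙 a.obj)) (h2 : FactorsThru X (g ≫ f - 𝟙 b.obj)) :
    (Quotient.functor (subRel X S)).obj a ≅ (Quotient.functor (subRel X S)).obj b where
  hom := (Quotient.functor (subRel X S)).map (X := a) (Y := b) (ObjectProperty.homMk f)
  inv := (Quotient.functor (subRel X S)).map (X := b) (Y := a) (ObjectProperty.homMk g)
  hom_inv_id := by
    rw [← Functor.map_comp, ← (Quotient.functor (subRel X S)).map_id a]
    exact CategoryTheory.Quotient.sound _ h1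
  inv_hom_id := by
    rw [← Functor.map_comp, ← (Quotient.functor (subRel X S)).map_id b]
    exact CategoryTheory.Quotient.sound _ h2

include hX in
lemma unit_ex (a : ObjectProperty.FullSubcategory (· ∈ 𝒜)) :
    ∃ (u : a.obj ⟶ (bwdD hmut (fwdD hmut a.obj a.property).B'
        (fwdD hmut a.obj a.property).hB').A')
      (u' : (bwdD hmut (fwdD hmut a.obj a.property).B'
        (fwdD hmut a.obj a.property).hB').A' ⟶ a.obj),
      (fwdD hmut a.obj a.property).δ ≫ u⟦(1 : ℤ)⟧' =
        (bwdD hmut (fwdD hmut a.obj a.property).B' (fwdD hmut a.obj a.property).hB').δ ∧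
      (bwdD hmut (fwdD hmut a.obj a.property).B' (fwdD hmut a.obj a.property).hB').δ ≫
          u'⟦(1 : ℤ)⟧' = (fwdD hmut a.obj a.property).δ ∧
      FactorsThru X (u ≫ u' - 𝟙 a.obj) ∧
      FactorsThru X (u' ≫ u - 𝟙 _) :=
  bwd_mutual hX (fwdD hmut a.obj a.property).hTri
    (bwdD hmut (fwdD hmut a.obj a.property).B' (fwdD hmut a.obj a.property).hB').hTri
    (fwdD hmut a.obj a.property).hβ
    (bwdD hmut (fwdD hmut a.obj a.property).B' (fwdD hmut a.obj a.property).hB').hβ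

include hX in
lemma counit_ex (b : ObjectProperty.FullSubcategory (· ∈ ℬ)) :
    ∃ (v : (fwdD hmut (bwdD hmut b.obj b.property).A'
        (bwdD hmut b.obj b.property).hA').B' ⟶ b.obj)
      (v' : b.obj ⟶ (fwdD hmut (bwdD hmut b.obj b.property).A'
        (bwdD hmut b.obj b.property).hA').B'),
      v ≫ (bwdD hmut b.obj b.property).δ =
        (fwdD hmut (bwdD hmut b.obj b.property).A' (bwdD hmut b.obj b.property).hA').δ ∧
      v' ≫ (fwdD hmut (bwdD hmut b.obj b.property).A'
        (bwdD hmut b.obj b.property).hA').δ = (bwdD hmut b.obj b.property).δ ∧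
      FactorsThru X (v ≫ v' - 𝟙 _) ∧
      FactorsThru X (v' ≫ v - 𝟙 b.obj) :=
  fwd_mutual hX
    (fwdD hmut (bwdD hmut b.obj b.property).A' (bwdD hmut b.obj b.property).hA').hTri
    (bwdD hmut b.obj b.property).hTri
    (fwdD hmut (bwdD hmut b.obj b.property).A' (bwdD hmut b.obj b.property).hA').hα
    (bwdD hmut b.obj b.property).hα

end Mutation3
section Mutation4

set_option linter.unusedSectionVars false

variable [Preadditive C] [HasZeroObject C] [HasShift C ℤ]
  [∀ n : ℤ, (shiftFunctor C n).Additive] [Pretriangulated C] [HasBinaryBiproducts C]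

variable {X 𝒜 ℬ : Set C} (hX : IsAdditiveClosedSubcat X) (hmut : IsMutationPair X 𝒜 ℬ)

noncomputable def uHom (a : ObjectProperty.FullSubcategory (· ∈ 𝒜)) :
    a.obj ⟶ (bwdD hmut (fwdD hmut a.obj a.property).B'
      (fwdD hmut a.obj a.property).hB').A' :=
  (unit_ex hX hmut a).choose

noncomputable def uInv (a : ObjectProperty.FullSubcategory (· ∈ 𝒜)) :
    (bwdD hmut (fwdD hmut a.obj a.property).B'
      (fwdD hmut a.obj a.property).hB').A' ⟶ a.obj :=
  (unit_ex hX hmut a).choose_spec.choose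

lemma uSpec (a : ObjectProperty.FullSubcategory (· ∈ 𝒜)) :
    (fwdD hmut a.obj a.property).δ ≫ (uHom hX hmut a)⟦(1 : ℤ)⟧' =
        (bwdD hmut (fwdD hmut a.obj a.property).B' (fwdD hmut a.obj a.property).hB').δ ∧
      (bwdD hmut (fwdD hmut a.obj a.property).B' (fwdD hmut a.obj a.property).hB').δ ≫
          (uInv hX hmut a)⟦(1 : ℤ)⟧' = (fwdD hmut a.obj a.property).δ ∧
      FactorsThru X (uHom hX hmut a ≫ uInv hX hmut a - 𝟙 a.obj) ∧
      FactorsThru X (uInv hX hmut a ≫ uHom hX hmut a - 𝟙 _) :=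
  (unit_ex hX hmut a).choose_spec.choose_spec

noncomputable def vHom (b : ObjectProperty.FullSubcategory (· ∈ ℬ)) :
    (fwdD hmut (bwdD hmut b.obj b.property).A'
      (bwdD hmut b.obj b.property).hA').B' ⟶ b.obj :=
  (counit_ex hX hmut b).choose

noncomputable def vInv (b : ObjectProperty.FullSubcategory (· ∈ ℬ)) :
    b.obj ⟶ (fwdD hmut (bwdD hmut b.obj b.property).A'
      (bwdD hmut b.obj b.property).hA').B' :=
  (counit_ex hX hmut b).choose_spec.choose

lemma vSpec (b : ObjectProperty.FullSubcategory (· ∈ ℬ)) :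
    vHom hX hmut b ≫ (bwdD hmut b.obj b.property).δ =
        (fwdD hmut (bwdD hmut b.obj b.property).A' (bwdD hmut b.obj b.property).hA').δ ∧
      vInv hX hmut b ≫ (fwdD hmut (bwdD hmut b.obj b.property).A'
        (bwdD hmut b.obj b.property).hA').δ = (bwdD hmut b.obj b.property).δ ∧
      FactorsThru X (vHom hX hmut b ≫ vInv hX hmut b - 𝟙 _) ∧
      FactorsThru X (vInv hX hmut b ≫ vHom hX hmut b - 𝟙 b.obj) :=
  (counit_ex hX hmut b).choose_spec.choose_spec

lemma GH_map (a b : ObjectProperty.FullSubcategory (· ∈ 𝒜)) (f : a ⟶ b) :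
    (GFun hX hmut ⋙ HFun hX hmut).map ((Quotient.functor (subRel X 𝒜)).map f) =
      (Quotient.functor (subRel X 𝒜)).map
        (X := ⟨(bwdD hmut (fwdD hmut a.obj a.property).B'
            (fwdD hmut a.obj a.property).hB').A',
          (bwdD hmut (fwdD hmut a.obj a.property).B'
            (fwdD hmut a.obj a.property).hB').hA'⟩)
        (Y := ⟨(bwdD hmut (fwdD hmut b.obj b.property).B'
            (fwdD hmut b.obj b.property).hB').A',
          (bwdD hmut (fwdD hmut b.obj b.property).B'
            (fwdD hmut b.obj b.property).hB').hA'⟩)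
        (ObjectProperty.homMk (bwdHom
          (bwdD hmut (fwdD hmut a.obj a.property).B' (fwdD hmut a.obj a.property).hB')
          (bwdD hmut (fwdD hmut b.obj b.property).B' (fwdD hmut b.obj b.property).hB')
          (fwdHom (fwdD hmut a.obj a.property) (fwdD hmut b.obj b.property) f.hom))) := rfl

lemma HG_map (a b : ObjectProperty.FullSubcategory (· ∈ ℬ)) (f : a ⟶ b) :
    (HFun hX hmut ⋙ GFun hX hmut).map ((Quotient.functor (subRel X ℬ)).map f) =
      (Quotient.functor (subRel X ℬ)).map
        (X := ⟨(fwdD hmut (bwdD hmut a.obj a.property).A'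
            (bwdD hmut a.obj a.property).hA').B',
          (fwdD hmut (bwdD hmut a.obj a.property).A'
            (bwdD hmut a.obj a.property).hA').hB'⟩)
        (Y := ⟨(fwdD hmut (bwdD hmut b.obj b.property).A'
            (bwdD hmut b.obj b.property).hA').B',
          (fwdD hmut (bwdD hmut b.obj b.property).A'
            (bwdD hmut b.obj b.property).hA').hB'⟩)
        (ObjectProperty.homMk (fwdHom
          (fwdD hmut (bwdD hmut a.obj a.property).A' (bwdD hmut a.obj a.property).hA')
          (fwdD hmut (bwdD hmut b.obj b.property).A' (bwdD hmut b.obj b.property).hA')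
          (bwdHom (bwdD hmut a.obj a.property) (bwdD hmut b.obj b.property) f.hom))) := rfl

/-- The unit isomorphism. -/
noncomputable def unitIso :
    𝟭 (CategoryTheory.Quotient (subRel X 𝒜)) ≅ GFun hX hmut ⋙ HFun hX hmut :=
  NatIso.ofComponents
    (fun a => quotMutualIso X (uHom hX hmut a.as) (uInv hX hmut a.as)
      (uSpec hX hmut a.as).2.2.1 (uSpec hX hmut a.as).2.2.2)
    (by
      rintro ⟨a⟩ ⟨b⟩ φ
      obtain ⟨f, rfl⟩ := (Quotient.functor (subRel X 𝒜)).map_surjective φ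
      rw [GH_map hX hmut a b f]
      dsimp only [Functor.id_map, quotMutualIso]
      refine (Functor.map_comp _ _ _).symm.trans (Eq.trans ?_ (Functor.map_comp _ _ _))
      refine CategoryTheory.Quotient.sound _ ?_
      show FactorsThru X ((unFS f ≫ uHom hX hmut b) -
        (uHom hX hmut a ≫ bwdHom
          (bwdD hmut (fwdD hmut a.obj a.property).B' (fwdD hmut a.obj a.property).hB')
          (bwdD hmut (fwdD hmut b.obj b.property).B' (fwdD hmut b.obj b.property).hB')
          (fwdHom (fwdD hmut a.obj a.property) (fwdD hmut b.obj b.property) f.hom)))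
      refine key_bwd (fwdD hmut a.obj a.property).hTri
        (bwdD hmut (fwdD hmut b.obj b.property).B' (fwdD hmut b.obj b.property).hB').hTri
        (bwdD hmut (fwdD hmut b.obj b.property).B' (fwdD hmut b.obj b.property).hB').hβ.2
        (fwdD hmut a.obj a.property).hβ.1
        (f := (0 : (fwdD hmut a.obj a.property).B' ⟶ (fwdD hmut b.obj b.property).B'))
        (factorsThru_zero hX _ _) ?_
      have e1 : (fwdD hmut a.obj a.property).δ ≫ (unFS f ≫ uHom hX hmut b)⟦(1 : ℤ)⟧' =
          fwdHom (fwdD hmut a.obj a.property) (fwdD hmut b.obj b.property) f.hom ≫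
            (bwdD hmut (fwdD hmut b.obj b.property).B' (fwdD hmut b.obj b.property).hB').δ := by
        rw [Functor.map_comp, ← Category.assoc,
          ← fwdHom_spec (fwdD hmut a.obj a.property) (fwdD hmut b.obj b.property) f.hom,
          Category.assoc, (uSpec hX hmut b).1]
      have e2 : (fwdD hmut a.obj a.property).δ ≫ (uHom hX hmut a ≫ bwdHom
            (bwdD hmut (fwdD hmut a.obj a.property).B' (fwdD hmut a.obj a.property).hB')
            (bwdD hmut (fwdD hmut b.obj b.property).B' (fwdD hmut b.obj b.property).hB')
            (fwdHom (fwdD hmut a.obj a.property) (fwdD hmut b.obj b.property) f.hom))⟦(1 : ℤ)⟧' =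
          fwdHom (fwdD hmut a.obj a.property) (fwdD hmut b.obj b.property) f.hom ≫
            (bwdD hmut (fwdD hmut b.obj b.property).B' (fwdD hmut b.obj b.property).hB').δ := by
        rw [Functor.map_comp, ← Category.assoc, (uSpec hX hmut a).1, ← bwdHom_spec]
      rw [zero_comp, Functor.map_sub, Preadditive.comp_sub, e1, e2, sub_self])

/-- The counit isomorphism. -/
noncomputable def counitIso :
    HFun hX hmut ⋙ GFun hX hmut ≅ 𝟭 (CategoryTheory.Quotient (subRel X ℬ)) :=
  NatIso.ofComponents
    (fun b => quotMutualIso X (vHom hX hmut b.as) (vInv hX hmut b.as)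
      (vSpec hX hmut b.as).2.2.1 (vSpec hX hmut b.as).2.2.2)
    (by
      rintro ⟨a⟩ ⟨b⟩ φ
      obtain ⟨f, rfl⟩ := (Quotient.functor (subRel X ℬ)).map_surjective φ
      rw [HG_map hX hmut a b f]
      dsimp only [Functor.id_map, quotMutualIso]
      refine (Functor.map_comp _ _ _).symm.trans (Eq.trans ?_ (Functor.map_comp _ _ _))
      refine CategoryTheory.Quotient.sound _ ?_
      show FactorsThru X ((fwdHom
          (fwdD hmut (bwdD hmut a.obj a.property).A' (bwdD hmut a.obj a.property).hA')
          (fwdD hmut (bwdD hmut b.obj b.property).A' (bwdD hmut b.obj b.property).hA')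
          (bwdHom (bwdD hmut a.obj a.property) (bwdD hmut b.obj b.property) f.hom) ≫
            vHom hX hmut b) - (vHom hX hmut a ≫ unFS f))
      refine key_fwd
        (fwdD hmut (bwdD hmut a.obj a.property).A' (bwdD hmut a.obj a.property).hA').hTri
        (bwdD hmut b.obj b.property).hTri
        (fwdD hmut (bwdD hmut a.obj a.property).A' (bwdD hmut a.obj a.property).hA').hα.2
        (bwdD hmut b.obj b.property).hα.1
        (f := (0 : (bwdD hmut a.obj a.property).A' ⟶ (bwdD hmut b.obj b.property).A'))
        (factorsThru_zero hX _ _) ?_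
      have e1 : (fwdHom
          (fwdD hmut (bwdD hmut a.obj a.property).A' (bwdD hmut a.obj a.property).hA')
          (fwdD hmut (bwdD hmut b.obj b.property).A' (bwdD hmut b.obj b.property).hA')
          (bwdHom (bwdD hmut a.obj a.property) (bwdD hmut b.obj b.property) f.hom) ≫
            vHom hX hmut b) ≫ (bwdD hmut b.obj b.property).δ =
          (fwdD hmut (bwdD hmut a.obj a.property).A' (bwdD hmut a.obj a.property).hA').δ ≫
            (bwdHom (bwdD hmut a.obj a.property) (bwdD hmut b.obj b.property) f.hom)⟦(1 : ℤ)⟧' := by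
        rw [Category.assoc, (vSpec hX hmut b).1, fwdHom_spec]
      have e2 : (vHom hX hmut a ≫ unFS f) ≫ (bwdD hmut b.obj b.property).δ =
          (fwdD hmut (bwdD hmut a.obj a.property).A' (bwdD hmut a.obj a.property).hA').δ ≫
            (bwdHom (bwdD hmut a.obj a.property) (bwdD hmut b.obj b.property) f.hom)⟦(1 : ℤ)⟧' := by
        rw [Category.assoc,
          bwdHom_spec (bwdD hmut a.obj a.property) (bwdD hmut b.obj b.property) f.hom,
          ← Category.assoc, (vSpec hX hmut a).1]
      rw [Functor.map_zero, comp_zero, Preadditive.sub_comp, e1, e2, sub_self])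

end Mutation4
/-- if `(𝒜, ℬ)` is an `X`-mutation pair, then the quotient
categories `𝒜/X` and `ℬ/X` are equivalent, via an equivalence `G` sending (the
class of) an object `A` of `𝒜` to (the class of) the third term `B'` of a
distinguished triangle `A → X₀ → B' → A⟦1⟧` whose first morphism is a left
`X`-approximation and whose second morphism is a right `X`-approximation. -/
theorem statement3 [Preadditive C] [HasZeroObject C] [HasShift C ℤ]
    [∀ n : ℤ, (shiftFunctor C n).Additive] [Pretriangulated C] [HasBinaryBiproducts C]
    (X 𝒜 ℬ : Set C) (hX : IsAdditiveClosedSubcat X)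
    (hmut : IsMutationPair X 𝒜 ℬ) :
    ∃ G : CategoryTheory.Quotient (subRel X 𝒜) ≌ CategoryTheory.Quotient (subRel X ℬ),
      ∀ (A : C) (hA : A ∈ 𝒜) (X₀ B' : C) (α : A ⟶ X₀) (β : X₀ ⟶ B')
        (δ : B' ⟶ (A⟦(1 : ℤ)⟧)) (hB' : B' ∈ ℬ),
        (Triangle.mk α β δ ∈ distTriang C) → IsLeftApprox X α → IsRightApprox X β →
        Nonempty (G.functor.obj ((Quotient.functor (subRel X 𝒜)).obj ⟨A, hA⟩) ≅
          (Quotient.functor (subRel X ℬ)).obj ⟨B', hB'⟩) := by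


  classical
  refine ⟨CategoryTheory.Equivalence.mk (GFun hX hmut) (HFun hX hmut)
    (unitIso hX hmut) (counitIso hX hmut), ?_⟩
  intro A hA X₀ B' α β δ hB' htri hlα hrβ
  obtain ⟨w, w', -, -, h3, h4⟩ :=
    fwd_mutual hX (fwdD hmut A hA).hTri htri (fwdD hmut A hA).hα hlα
  exact ⟨quotMutualIso X (a := ⟨(fwdD hmut A hA).B', (fwdD hmut A hA).hB'⟩)
    (b := ⟨B', hB'⟩) w w' h3 h4⟩

end PaperStmt
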